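/- Let A be a finite set with |A| ≥ 3 and let n ≥ 2. For distinct indices i, j ∈ Fin n and an even permutation τ of A × A, let g_{i,j,τ} be the permutation of (Fin n → A) defined by (g x)(i) = first component of τ(x(i), x(j)), (g x)(j) = second component of τ(x(i), x(j)), and (g x)(l) = x(l) for l ∉ {i, j}. Then the subgroup of the symmetric group on (Fin n → A) generated by all such permutations g_{i,j,τ} equals the alternating group on (Fin n → A). -/

import Mathlib

set_option linter.unusedSectionVars false
set_option linter.unusedVariables false
set_option maxHeartbeats 1000000
open Equiv Equiv.Perm Subgroup

namespace Stmt13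
section cycles


variable {M : Type*} [DecidableEq M]

/-- The 3-cycle sending `a ↦ b ↦ c ↦ a`. -/
def cyc (a b c : M) : Equiv.Perm M := Equiv.swap a c * Equiv.swap a b

lemma cyc_apply₁ {a b c : M} (hab : a ≠ b) (hbc : b ≠ c) : cyc a b c a = b := by
  simp [cyc, Equiv.Perm.mul_apply, Equiv.swap_apply_of_ne_of_ne hab.symm hbc]

lemma cyc_apply₂ {a b c : M} (hab : a ≠ b) (hbc : b ≠ c) : cyc a b c b = c := by
  simp [cyc, Equiv.swap_apply_of_ne_of_ne hab.symm hbc, Equiv.Perm.mul_apply]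

lemma cyc_apply₃ {a b c : M} (hac : a ≠ c) (hbc : b ≠ c) : cyc a b c c = a := by
  simp [cyc, Equiv.Perm.mul_apply, Equiv.swap_apply_of_ne_of_ne hac.symm hbc.symm]

lemma cyc_apply_of_ne {a b c d : M} (ha : d ≠ a) (hb : d ≠ b) (hc : d ≠ c) :
    cyc a b c d = d := by
  simp [cyc, Equiv.Perm.mul_apply, Equiv.swap_apply_of_ne_of_ne ha hb,
    Equiv.swap_apply_of_ne_of_ne ha hc]

lemma swap_conj (g : Equiv.Perm M) (a b : M) :
    g * Equiv.swap a b * g⁻¹ = Equiv.swap (g a) (g b) := by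
  ext x
  simp [Equiv.Perm.mul_apply, Equiv.swap_apply_def, g.injective.eq_iff,
    ← g.eq_symm_apply]
  split_ifs <;> simp_all [Equiv.Perm.inv_def, Equiv.symm_apply_eq]

lemma cyc_conj (g : Equiv.Perm M) (a b c : M) :
    g * cyc a b c * g⁻¹ = cyc (g a) (g b) (g c) := by
  have h1 : g * (Equiv.swap a c * Equiv.swap a b) * g⁻¹
      = (g * Equiv.swap a c * g⁻¹) * (g * Equiv.swap a b * g⁻¹) := by group
  rw [cyc, h1, swap_conj, swap_conj, cyc]

lemma sign_cyc {a b c : M} [Fintype M] (hab : a ≠ b) (hac : a ≠ c) :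
    Equiv.Perm.sign (cyc a b c) = 1 := by
  simp [cyc, Equiv.Perm.sign_swap, hab, hac]

lemma cyc_sq {a b c : M} (hab : a ≠ b) (hac : a ≠ c) (hbc : b ≠ c) :
    cyc a c b * cyc a c b = cyc a b c := by
  ext x
  by_cases hx1 : x = a
  · subst hx1
    rw [Equiv.Perm.mul_apply, cyc_apply₁ hac hbc.symm, cyc_apply₂ hac hbc.symm,
      cyc_apply₁ hab hbc]
  by_cases hx2 : x = b
  · subst hx2
    rw [Equiv.Perm.mul_apply, cyc_apply₃ hab hbc.symm, cyc_apply₁ hac hbc.symm,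
      cyc_apply₂ hab hbc]
  by_cases hx3 : x = c
  · subst hx3
    rw [Equiv.Perm.mul_apply, cyc_apply₂ hac hbc.symm, cyc_apply₃ hab hbc.symm,
      cyc_apply₃ hac hbc]
  · rw [Equiv.Perm.mul_apply, cyc_apply_of_ne hx1 hx3 hx2, cyc_apply_of_ne hx1 hx3 hx2,
      cyc_apply_of_ne hx1 hx2 hx3]

lemma cyc_eq_commutator {a b c : M} (hab : a ≠ b) (hac : a ≠ c) (hbc : b ≠ c) :
    Equiv.swap a b * Equiv.swap a c * (Equiv.swap a b)⁻¹ * (Equiv.swap a c)⁻¹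
      = cyc a b c := by
  ext x
  simp only [Equiv.Perm.mul_apply, Equiv.swap_inv]
  by_cases hx1 : x = a
  · subst hx1
    rw [Equiv.swap_apply_left, Equiv.swap_apply_of_ne_of_ne hac.symm hbc.symm,
      Equiv.swap_apply_right, Equiv.swap_apply_left, cyc_apply₁ hab hbc]
  by_cases hx2 : x = b
  · subst hx2
    rw [Equiv.swap_apply_of_ne_of_ne hab.symm hbc, Equiv.swap_apply_right,
      Equiv.swap_apply_left, Equiv.swap_apply_of_ne_of_ne hac.symm hbc.symm,
      cyc_apply₂ hab hbc]
  by_cases hx3 : x = c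
  · subst hx3
    rw [Equiv.swap_apply_right, Equiv.swap_apply_left,
      Equiv.swap_apply_of_ne_of_ne hab.symm hbc, Equiv.swap_apply_right,
      cyc_apply₃ hac hbc]
  · rw [Equiv.swap_apply_of_ne_of_ne hx1 hx3, Equiv.swap_apply_of_ne_of_ne hx1 hx2,
      Equiv.swap_apply_of_ne_of_ne hx1 hx3, Equiv.swap_apply_of_ne_of_ne hx1 hx2,
      cyc_apply_of_ne hx1 hx2 hx3]



variable {M : Type*} [DecidableEq M] [Fintype M]

lemma exists_two_outside (h5 : 5 ≤ Fintype.card M) (a b c : M) :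
    ∃ d e : M, d ≠ e ∧ d ≠ a ∧ d ≠ b ∧ d ≠ c ∧ e ≠ a ∧ e ≠ b ∧ e ≠ c := by
  classical
  set s : Finset M := {a, b, c} with hs
  have hcard : s.card ≤ 3 := by
    refine (Finset.card_insert_le _ _).trans ?_
    have := (Finset.card_insert_le b ({c} : Finset M))
    simp only [Finset.card_singleton] at this ⊢
    omega
  have hcompl : 1 < sᶜ.card := by
    have := Finset.card_compl s (α := M)
    omega
  obtain ⟨d, e, hd, he, hde⟩ := Finset.one_lt_card_iff.mp hcompl
  rw [Finset.mem_compl, hs] at hd he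
  simp only [Finset.mem_insert, Finset.mem_singleton, not_or] at hd he
  exact ⟨d, e, hde, hd.1, hd.2.1, hd.2.2, he.1, he.2.1, he.2.2⟩

lemma exists_even_map3_of_distinct (h5 : 5 ≤ Fintype.card M)
    {a b c a' b' c' : M} (hab : a ≠ b) (hac : a ≠ c) (hbc : b ≠ c)
    (hab' : a' ≠ b') (hac' : a' ≠ c') (hbc' : b' ≠ c') :
    ∃ σ : Equiv.Perm M, Equiv.Perm.sign σ = 1 ∧ σ a = a' ∧ σ b = b' ∧ σ c = c' := by
  classical
  set π₁ := Equiv.swap a a' with hπ₁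
  set b₁ := π₁ b with hb₁
  set π₂ := Equiv.swap b₁ b' with hπ₂
  set c₂ := π₂ (π₁ c) with hc₂
  set π₃ := Equiv.swap c₂ c' with hπ₃
  have hb₁a' : b₁ ≠ a' := by
    have : π₁ a = a' := Equiv.swap_apply_left _ _
    rw [hb₁, ← this]; exact fun h => hab (π₁.injective h).symm
  have hπ₂a' : π₂ a' = a' := Equiv.swap_apply_of_ne_of_ne hb₁a'.symm hab'
  have hc₂a' : c₂ ≠ a' := by
    rw [hc₂, ← hπ₂a']
    intro h
    apply hac
    have h2 := π₂.injective h
    have : π₁ a = a' := Equiv.swap_apply_left _ _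
    exact π₁.injective (by rw [this, h2])
  have hc₂b' : c₂ ≠ b' := by
    rw [hc₂]
    have : π₂ b₁ = b' := Equiv.swap_apply_left _ _
    rw [← this]
    intro h
    exact hbc (π₁.injective (π₂.injective h)).symm
  have hπa : (π₃ * π₂ * π₁) a = a' := by
    simp only [Equiv.Perm.mul_apply]
    rw [show π₁ a = a' from Equiv.swap_apply_left _ _, hπ₂a',
      Equiv.swap_apply_of_ne_of_ne hc₂a'.symm hac']
  have hπb : (π₃ * π₂ * π₁) b = b' := by
    simp only [Equiv.Perm.mul_apply]
    rw [← hb₁, show π₂ b₁ = b' from Equiv.swap_apply_left _ _,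
      Equiv.swap_apply_of_ne_of_ne hc₂b'.symm hbc']
  have hπc : (π₃ * π₂ * π₁) c = c' := by
    simp only [Equiv.Perm.mul_apply]
    rw [← hc₂, Equiv.swap_apply_left]
  set π := π₃ * π₂ * π₁ with hπ
  rcases Int.units_eq_one_or (Equiv.Perm.sign π) with hsgn | hsgn
  · exact ⟨π, hsgn, hπa, hπb, hπc⟩
  · obtain ⟨d, e, hde, hda, hdb, hdc, hea, heb, hec⟩ := exists_two_outside h5 a b c
    refine ⟨π * Equiv.swap d e, ?_, ?_, ?_, ?_⟩
    · rw [map_mul, hsgn, Equiv.Perm.sign_swap hde]; norm_num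
    · rw [Equiv.Perm.mul_apply, Equiv.swap_apply_of_ne_of_ne hda.symm hea.symm, hπa]
    · rw [Equiv.Perm.mul_apply, Equiv.swap_apply_of_ne_of_ne hdb.symm heb.symm, hπb]
    · rw [Equiv.Perm.mul_apply, Equiv.swap_apply_of_ne_of_ne hdc.symm hec.symm, hπc]

lemma exists_even_map3 (h5 : 5 ≤ Fintype.card M)
    (a b c a' b' c' : M) (hab : a = b ↔ a' = b') (hac : a = c ↔ a' = c')
    (hbc : b = c ↔ b' = c') :
    ∃ σ : Equiv.Perm M, Equiv.Perm.sign σ = 1 ∧ σ a = a' ∧ σ b = b' ∧ σ c = c' := by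
  classical
  by_cases h1 : a = b
  · have h1' : a' = b' := hab.mp h1
    by_cases h2 : a = c
    · -- all three equal
      have h2' : a' = c' := hac.mp h2
      obtain ⟨d, e, hde, hda, _, _, hea, _, _⟩ := exists_two_outside h5 a a a
      obtain ⟨d', e', hde', hda', _, _, hea', _, _⟩ := exists_two_outside h5 a' a' a'
      obtain ⟨σ, hσ, h₁, _, _⟩ :=
        exists_even_map3_of_distinct h5 hda.symm hea.symm hde hda'.symm hea'.symm hde'
      exact ⟨σ, hσ, h₁, by rw [← h1, h₁, h1'], by rw [← h2, h₁, h2']⟩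
    · -- a = b ≠ c
      have h2' : a' ≠ c' := fun h => h2 (hac.mpr h)
      obtain ⟨d, _, _, hda, _, hdc, _, _, _⟩ := exists_two_outside h5 a c c
      obtain ⟨d', _, _, hda', _, hdc', _, _, _⟩ := exists_two_outside h5 a' c' c'
      obtain ⟨σ, hσ, h₁, h₂, _⟩ :=
        exists_even_map3_of_distinct h5 h2 hda.symm (Ne.symm hdc) h2' hda'.symm (Ne.symm hdc')
      exact ⟨σ, hσ, h₁, by rw [← h1, h₁, h1'], h₂⟩
  · have h1' : a' ≠ b' := fun h => h1 (hab.mpr h)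
    by_cases h2 : a = c
    · have h2' : a' = c' := hac.mp h2
      obtain ⟨d, _, _, hda, hdb, _, _, _, _⟩ := exists_two_outside h5 a b b
      obtain ⟨d', _, _, hda', hdb', _, _, _, _⟩ := exists_two_outside h5 a' b' b'
      obtain ⟨σ, hσ, h₁, h₂, _⟩ :=
        exists_even_map3_of_distinct h5 h1 hda.symm (Ne.symm hdb) h1' hda'.symm (Ne.symm hdb')
      exact ⟨σ, hσ, h₁, h₂, by rw [← h2, h₁, h2']⟩
    · by_cases h3 : b = c
      · have h3' : b' = c' := hbc.mp h3
        obtain ⟨d, _, _, hda, hdb, _, _, _, _⟩ := exists_two_outside h5 a b b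
        obtain ⟨d', _, _, hda', hdb', _, _, _, _⟩ := exists_two_outside h5 a' b' b'
        obtain ⟨σ, hσ, h₁, h₂, _⟩ :=
          exists_even_map3_of_distinct h5 h1 hda.symm (Ne.symm hdb) h1' hda'.symm (Ne.symm hdb')
        exact ⟨σ, hσ, h₁, h₂, by rw [← h3, h₂, h3']⟩
      · have h2' : a' ≠ c' := fun h => h2 (hac.mpr h)
        have h3' : b' ≠ c' := fun h => h3 (hbc.mpr h)
        exact exists_even_map3_of_distinct h5 h1 h2 h3 h1' h2' h3'



lemma isThreeCycle_eq_cyc {σ : Equiv.Perm M} (h : σ.IsThreeCycle) :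
    ∃ x y z : M, x ≠ y ∧ x ≠ z ∧ y ≠ z ∧ σ = cyc x y z := by
  classical
  have hcard : σ.support.card = 3 := h.card_support
  obtain ⟨x, hx⟩ : ∃ x, x ∈ σ.support := Finset.card_pos.mp (by omega)
  set y := σ x with hy
  set z := σ y with hz
  have h3 : σ ^ 3 = 1 := by rw [← h.orderOf]; exact pow_orderOf_eq_one σ
  have h3x : σ (σ (σ x)) = x := by
    have := congrFun (congrArg (fun (p : Equiv.Perm M) => (p : M → M)) h3) x
    simpa [pow_succ, Equiv.Perm.mul_apply] using this
  have hσz : σ z = x := by rw [hz, hy]; exact h3x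
  have hyx : y ≠ x := Equiv.Perm.mem_support.mp hx
  have hysupp : y ∈ σ.support := Equiv.Perm.apply_mem_support.mpr hx
  have hzy : z ≠ y := Equiv.Perm.mem_support.mp hysupp
  have hzsupp : z ∈ σ.support := Equiv.Perm.apply_mem_support.mpr hysupp
  have hzx : z ≠ x := by
    intro hzx
    apply hyx
    rw [← hσz, hzx, hy]
  have hsupp_eq : σ.support = {x, y, z} := by
    symm
    apply Finset.eq_of_subset_of_card_le
    · intro t ht
      simp only [Finset.mem_insert, Finset.mem_singleton] at ht
      rcases ht with rfl | rfl | rfl <;> assumption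
    · rw [hcard]
      have h1 : ({x, y, z} : Finset M).card = 3 := by
        rw [Finset.card_insert_of_notMem (by simp [hyx.symm, hzx.symm]),
          Finset.card_insert_of_notMem (by simp [hzy.symm]), Finset.card_singleton]
      omega
  refine ⟨x, y, z, hyx.symm, hzx.symm, hzy.symm, ?_⟩
  ext a
  by_cases ha1 : a = x
  · subst ha1; rw [cyc_apply₁ hyx.symm hzy.symm, ← hy]
  by_cases ha2 : a = y
  · subst ha2; rw [cyc_apply₂ hyx.symm hzy.symm, ← hz]
  by_cases ha3 : a = z
  · subst ha3; rw [cyc_apply₃ hzx.symm hzy.symm, hσz]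
  · rw [cyc_apply_of_ne ha1 ha2 ha3]
    apply Equiv.Perm.notMem_support.mp
    rw [hsupp_eq]
    simp [ha1, ha2, ha3]


end cycles


variable {U V W : Type*} [Fintype U] [DecidableEq U] [Fintype V] [DecidableEq V]
  [Fintype W] [DecidableEq W]

/-- Even permutation of the first two coordinates. -/
def big1 (σ : Equiv.Perm (U × V)) : Equiv.Perm (U × V × W) :=
  (Equiv.prodAssoc U V W).permCongr (σ.prodCongr (Equiv.refl W))

/-- Even permutation of the last two coordinates. -/
def big2 (σ : Equiv.Perm (V × W)) : Equiv.Perm (U × V × W) :=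
  (Equiv.refl U).prodCongr σ

omit [Fintype U] [DecidableEq U] [Fintype V] [DecidableEq V] [Fintype W] [DecidableEq W] in
@[simp] lemma big1_apply (σ : Equiv.Perm (U × V)) (p : U × V × W) :
    big1 σ p = ((σ (p.1, p.2.1)).1, (σ (p.1, p.2.1)).2, p.2.2) := rfl

omit [Fintype U] [DecidableEq U] [Fintype V] [DecidableEq V] [Fintype W] [DecidableEq W] in
@[simp] lemma big2_apply (σ : Equiv.Perm (V × W)) (p : U × V × W) :
    big2 σ p = (p.1, σ p.2) := rfl

lemma big1_mul (σ σ' : Equiv.Perm (U × V)) :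
    big1 (W := W) (σ * σ') = big1 σ * big1 σ' := by
  ext ⟨u, v, w⟩ : 1
  simp [Equiv.Perm.mul_apply]

lemma big2_mul (σ σ' : Equiv.Perm (V × W)) :
    big2 (U := U) (σ * σ') = big2 σ * big2 σ' := by
  ext ⟨u, v, w⟩ : 1
  simp [Equiv.Perm.mul_apply]

/-- Middle-coordinate permutation controlled by outer coordinates. -/
def cfun (g : U × W → Equiv.Perm V) : Equiv.Perm (U × V × W) where
  toFun p := (p.1, g (p.1, p.2.2) p.2.1, p.2.2)
  invFun p := (p.1, (g (p.1, p.2.2))⁻¹ p.2.1, p.2.2)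
  left_inv := by rintro ⟨u, v, w⟩; simp
  right_inv := by rintro ⟨u, v, w⟩; simp

@[simp] lemma cfun_apply (g : U × W → Equiv.Perm V) (u : U) (v : V) (w : W) :
    cfun g (u, v, w) = (u, g (u, w) v, w) := rfl

lemma cfun_mul (f g : U × W → Equiv.Perm V) : cfun f * cfun g = cfun (f * g) := by
  ext ⟨u, v, w⟩ : 1
  simp [Equiv.Perm.mul_apply]

lemma cfun_one : cfun (1 : U × W → Equiv.Perm V) = 1 := by
  ext ⟨u, v, w⟩ : 1
  simp

lemma cfun_inv (g : U × W → Equiv.Perm V) : (cfun g)⁻¹ = cfun g⁻¹ := by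
  rw [eq_comm, eq_inv_iff_mul_eq_one, cfun_mul, inv_mul_cancel, cfun_one]

lemma big1_prodExtendRight (u₀ : U) (t : Equiv.Perm V) :
    big1 (W := W) (Equiv.Perm.prodExtendRight u₀ t)
      = cfun (fun p => if p.1 = u₀ then t else 1) := by
  ext ⟨u, v, w⟩ : 1
  by_cases h : u = u₀
  · subst h; simp
  · simp [h, Equiv.Perm.prodExtendRight_apply_ne t h v]

/-- Middle permutation controlled by the `W`-coordinate, as a permutation of `V × W`. -/
def ctrlW (w₀ : W) (s : Equiv.Perm V) : Equiv.Perm (V × W) :=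
  (Equiv.prodComm W V).permCongr (Equiv.Perm.prodExtendRight w₀ s)

lemma ctrlW_apply (w₀ : W) (s : Equiv.Perm V) (v : V) (w : W) :
    ctrlW w₀ s (v, w) = (if w = w₀ then s v else v, w) := by
  by_cases h : w = w₀
  · subst h; simp [ctrlW]
  · simp [ctrlW, h, Equiv.Perm.prodExtendRight_apply_ne s h v]

lemma sign_ctrlW (w₀ : W) (s : Equiv.Perm V) :
    Equiv.Perm.sign (ctrlW w₀ s) = Equiv.Perm.sign s := by
  rw [ctrlW, Equiv.Perm.sign_permCongr, Equiv.Perm.sign_prodExtendRight]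

lemma big2_ctrlW (w₀ : W) (s : Equiv.Perm V) :
    big2 (U := U) (ctrlW w₀ s) = cfun (fun p => if p.2 = w₀ then s else 1) := by
  ext ⟨u, v, w⟩ : 1
  by_cases h : w = w₀ <;> simp [ctrlW_apply, h]

section K

variable (K : Subgroup (Equiv.Perm (U × V × W)))
  (h1 : ∀ σ : Equiv.Perm (U × V), Equiv.Perm.sign σ = 1 → big1 σ ∈ K)
  (h2 : ∀ σ : Equiv.Perm (V × W), Equiv.Perm.sign σ = 1 → big2 σ ∈ K)

include h1 in
lemma memJ1 (u₀ u₁ : U) (hu : u₀ ≠ u₁) (t : Equiv.Perm V) :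
    cfun (fun p => if p.1 = u₀ then t else if p.1 = u₁ then t else 1) ∈ K := by
  have hmem := h1 (Equiv.Perm.prodExtendRight u₀ t * Equiv.Perm.prodExtendRight u₁ t)
    (by rw [map_mul, Equiv.Perm.sign_prodExtendRight, Equiv.Perm.sign_prodExtendRight,
      ← sq, Int.units_sq])
  rw [big1_mul, big1_prodExtendRight, big1_prodExtendRight, cfun_mul] at hmem
  convert hmem using 2
  funext p
  by_cases hp0 : p.1 = u₀ <;> by_cases hp1 : p.1 = u₁ <;>
    simp_all [Pi.mul_apply]

include h2 in
lemma memJ2 (w₀ w₁ : W) (hw : w₀ ≠ w₁) (s t : Equiv.Perm V)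
    (hst : Equiv.Perm.sign s * Equiv.Perm.sign t = 1) :
    cfun (fun p => if p.2 = w₀ then s else if p.2 = w₁ then t else 1) ∈ K := by
  have hmem := h2 (ctrlW w₀ s * ctrlW w₁ t)
    (by rw [map_mul, sign_ctrlW, sign_ctrlW]; exact hst)
  rw [big2_mul, big2_ctrlW, big2_ctrlW, cfun_mul] at hmem
  convert hmem using 2
  funext p
  by_cases hp0 : p.2 = w₀ <;> by_cases hp1 : p.2 = w₁ <;>
    simp_all [Pi.mul_apply]

include h1 h2 in
lemma mem_vpair (u₀ u₁ : U) (hu : u₀ ≠ u₁) (w₀ w₁ : W) (hw : w₀ ≠ w₁)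
    (t s : Equiv.Perm V) (ht : Equiv.Perm.sign t = -1) (hs : Equiv.Perm.sign s = -1) :
    cfun (fun p => if (p.1 = u₀ ∨ p.1 = u₁) ∧ p.2 = w₀ then t * s * t⁻¹ * s⁻¹ else 1)
      ∈ K := by
  have hJ1 := memJ1 K h1 u₀ u₁ hu t
  have hJ2 := memJ2 K h2 w₀ w₁ hw s t (by rw [hs, ht]; norm_num)
  have hmem := K.mul_mem (K.mul_mem (K.mul_mem hJ1 hJ2) (K.inv_mem hJ1)) (K.inv_mem hJ2)
  rw [cfun_inv, cfun_inv, cfun_mul, cfun_mul, cfun_mul] at hmem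
  convert hmem using 2
  funext p
  simp only [Pi.mul_apply, Pi.inv_apply]
  by_cases hp0 : p.1 = u₀ <;> by_cases hp1 : p.1 = u₁ <;>
    by_cases hq0 : p.2 = w₀ <;> by_cases hq1 : p.2 = w₁ <;>
    first
      | (exact absurd (hq0 ▸ hq1 : w₀ = w₁) hw)
      | simp_all
      | (simp_all; group)

end K


section K2

lemma exists_pair_ne_of {M : Type*} [Fintype M] [DecidableEq M]
    (h : 3 ≤ Fintype.card M) (a : M) : ∃ b c : M, a ≠ b ∧ a ≠ c ∧ b ≠ c := by
  have hcard : 1 < (Finset.univ.erase a).card := by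
    have := Finset.card_erase_of_mem (Finset.mem_univ a)
    rw [Finset.card_univ] at this
    omega
  obtain ⟨b, c, hb, hc, hbc⟩ := Finset.one_lt_card_iff.mp hcard
  exact ⟨b, c, (Finset.ne_of_mem_erase hb).symm, (Finset.ne_of_mem_erase hc).symm, hbc⟩

variable (K : Subgroup (Equiv.Perm (U × V × W)))
  (h1 : ∀ σ : Equiv.Perm (U × V), Equiv.Perm.sign σ = 1 → big1 σ ∈ K)
  (h2 : ∀ σ : Equiv.Perm (V × W), Equiv.Perm.sign σ = 1 → big2 σ ∈ K)

include h1 h2 in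
lemma mem_single (hU : 3 ≤ Fintype.card U) (u₀ : U) (w₀ w₁ : W) (hw : w₀ ≠ w₁)
    {v₁ v₂ v₃ : V} (h12 : v₁ ≠ v₂) (h13 : v₁ ≠ v₃) (h23 : v₂ ≠ v₃) :
    cfun (fun p => if p.1 = u₀ ∧ p.2 = w₀ then cyc v₁ v₂ v₃ else 1) ∈ K := by
  obtain ⟨u₁, u₂, h01, h02, h12u⟩ := exists_pair_ne_of hU u₀
  set t := Equiv.swap v₁ v₃ with htdef
  set s := Equiv.swap v₁ v₂ with hsdef
  have hts : t * s * t⁻¹ * s⁻¹ = cyc v₁ v₃ v₂ := cyc_eq_commutator h13 h12 h23.symm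
  have hsignt : Equiv.Perm.sign t = -1 := Equiv.Perm.sign_swap h13
  have hsigns : Equiv.Perm.sign s = -1 := Equiv.Perm.sign_swap h12
  have hA := mem_vpair K h1 h2 u₀ u₁ h01 w₀ w₁ hw t s hsignt hsigns
  have hB := mem_vpair K h1 h2 u₁ u₂ h12u w₀ w₁ hw t s hsignt hsigns
  have hC := mem_vpair K h1 h2 u₀ u₂ h02 w₀ w₁ hw t s hsignt hsigns
  rw [hts] at hA hB hC
  have hmem := K.mul_mem (K.mul_mem hA (K.inv_mem hB)) hC
  rw [cfun_inv, cfun_mul, cfun_mul] at hmem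
  convert hmem using 2
  funext p
  simp only [Pi.mul_apply, Pi.inv_apply]
  by_cases hq : p.2 = w₀
  · by_cases hp0 : p.1 = u₀
    · have e1 : p.1 ≠ u₁ := by rw [hp0]; exact h01
      have e2 : p.1 ≠ u₂ := by rw [hp0]; exact h02
      rw [if_pos ⟨hp0, hq⟩, if_pos ⟨Or.inl hp0, hq⟩,
        if_neg (by simp [e1, e2] : ¬((p.1 = u₁ ∨ p.1 = u₂) ∧ p.2 = w₀)),
        if_pos ⟨Or.inl hp0, hq⟩, inv_one, mul_one, cyc_sq h12 h13 h23]
    · by_cases hp1 : p.1 = u₁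
      · have e2 : p.1 ≠ u₂ := by rw [hp1]; exact h12u
        rw [if_neg (by simp [hp0] : ¬(p.1 = u₀ ∧ p.2 = w₀)),
          if_pos ⟨Or.inr hp1, hq⟩, if_pos ⟨Or.inl hp1, hq⟩,
          if_neg (by simp [hp0, e2] : ¬((p.1 = u₀ ∨ p.1 = u₂) ∧ p.2 = w₀))]
        group
      · by_cases hp2 : p.1 = u₂
        · rw [if_neg (by simp [hp0] : ¬(p.1 = u₀ ∧ p.2 = w₀)),
            if_neg (by simp [hp0, hp1] : ¬((p.1 = u₀ ∨ p.1 = u₁) ∧ p.2 = w₀)),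
            if_pos ⟨Or.inr hp2, hq⟩, if_pos ⟨Or.inr hp2, hq⟩]
          group
        · rw [if_neg (by simp [hp0] : ¬(p.1 = u₀ ∧ p.2 = w₀)),
            if_neg (by simp [hp0, hp1] : ¬((p.1 = u₀ ∨ p.1 = u₁) ∧ p.2 = w₀)),
            if_neg (by simp [hp1, hp2] : ¬((p.1 = u₁ ∨ p.1 = u₂) ∧ p.2 = w₀)),
            if_neg (by simp [hp0, hp2] : ¬((p.1 = u₀ ∨ p.1 = u₂) ∧ p.2 = w₀))]
          group
  · rw [if_neg (by simp [hq] : ¬(p.1 = u₀ ∧ p.2 = w₀)),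
      if_neg (by simp [hq] : ¬((p.1 = u₀ ∨ p.1 = u₁) ∧ p.2 = w₀)),
      if_neg (by simp [hq] : ¬((p.1 = u₁ ∨ p.1 = u₂) ∧ p.2 = w₀)),
      if_neg (by simp [hq] : ¬((p.1 = u₀ ∨ p.1 = u₂) ∧ p.2 = w₀))]
    group

lemma cfun_single_eq_cyc (u₀ : U) (w₀ : W) {v₁ v₂ v₃ : V}
    (h12 : v₁ ≠ v₂) (h13 : v₁ ≠ v₃) (h23 : v₂ ≠ v₃) :
    cfun (fun p => if p.1 = u₀ ∧ p.2 = w₀ then cyc v₁ v₂ v₃ else 1)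
      = cyc ((u₀, v₁, w₀) : U × V × W) (u₀, v₂, w₀) (u₀, v₃, w₀) := by
  have T12 : ((u₀, v₁, w₀) : U × V × W) ≠ (u₀, v₂, w₀) := by simp [h12]
  have T13 : ((u₀, v₁, w₀) : U × V × W) ≠ (u₀, v₃, w₀) := by simp [h13]
  have T23 : ((u₀, v₂, w₀) : U × V × W) ≠ (u₀, v₃, w₀) := by simp [h23]
  ext ⟨u, v, w⟩ : 1
  by_cases hc : u = u₀ ∧ w = w₀
  · obtain ⟨rfl, rfl⟩ := hc
    simp only [cfun_apply, eq_self_iff_true, and_self, if_true]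
    by_cases hv1 : v = v₁
    · subst hv1; rw [cyc_apply₁ h12 h23, cyc_apply₁ T12 T23]
    by_cases hv2 : v = v₂
    · subst hv2; rw [cyc_apply₂ h12 h23, cyc_apply₂ T12 T23]
    by_cases hv3 : v = v₃
    · subst hv3; rw [cyc_apply₃ h13 h23, cyc_apply₃ T13 T23]
    · rw [cyc_apply_of_ne hv1 hv2 hv3,
        cyc_apply_of_ne (by simp [hv1]) (by simp [hv2]) (by simp [hv3])]
  · have key : ∀ v' : V, ((u, v, w) : U × V × W) ≠ (u₀, v', w₀) := by
      intro v' heq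
      rw [Prod.mk.injEq, Prod.mk.injEq] at heq
      exact hc ⟨heq.1, heq.2.2⟩
    simp only [cfun_apply, if_neg hc, Equiv.Perm.one_apply]
    rw [cyc_apply_of_ne (key v₁) (key v₂) (key v₃)]

include h1 h2 in
lemma mem_cyc_mid (hU : 3 ≤ Fintype.card U) (u₀ : U) (w₀ w₁ : W) (hw : w₀ ≠ w₁)
    {v₁ v₂ v₃ : V} (h12 : v₁ ≠ v₂) (h13 : v₁ ≠ v₃) (h23 : v₂ ≠ v₃) :
    cyc ((u₀, v₁, w₀) : U × V × W) (u₀, v₂, w₀) (u₀, v₃, w₀) ∈ K := by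
  rw [← cfun_single_eq_cyc u₀ w₀ h12 h13 h23]
  exact mem_single K h1 h2 hU u₀ w₀ w₁ hw h12 h13 h23

end K2

section K3

variable (K : Subgroup (Equiv.Perm (U × V × W)))
  (h1 : ∀ σ : Equiv.Perm (U × V), Equiv.Perm.sign σ = 1 → big1 σ ∈ K)
  (h2 : ∀ σ : Equiv.Perm (V × W), Equiv.Perm.sign σ = 1 → big2 σ ∈ K)

include h1 h2 in
lemma three_trans (hU : 3 ≤ Fintype.card U) (hV : 3 ≤ Fintype.card V)
    (hW : 3 ≤ Fintype.card W) (x y z : U × V × W)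
    (hxy : x ≠ y) (hxz : x ≠ z) (hyz : y ≠ z) :
    ∃ h ∈ K, ∃ (u : U) (w : W) (v₁ v₂ v₃ : V), v₁ ≠ v₂ ∧ v₁ ≠ v₃ ∧ v₂ ≠ v₃ ∧
      h x = (u, v₁, w) ∧ h y = (u, v₂, w) ∧ h z = (u, v₃, w) := by
  classical
  obtain ⟨v₁, v₂, v₃, hv12, hv13, hv23⟩ := Fintype.two_lt_card_iff.mp
    (by omega : 2 < Fintype.card V)
  have hUV5 : 5 ≤ Fintype.card (U × V) := by
    rw [Fintype.card_prod]; nlinarith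
  have hVW5 : 5 ≤ Fintype.card (V × W) := by
    rw [Fintype.card_prod]; nlinarith
  obtain ⟨u₀⟩ : Nonempty U := Fintype.card_pos_iff.mp (by omega)
  obtain ⟨w₀⟩ : Nonempty W := Fintype.card_pos_iff.mp (by omega)
  obtain ⟨x₁, x₂, x₃⟩ := x
  obtain ⟨y₁, y₂, y₃⟩ := y
  obtain ⟨z₁, z₂, z₃⟩ := z
  set qx : U × V := (x₁, x₂) with hqx
  set qy : U × V := (y₁, y₂) with hqy
  set qz : U × V := (z₁, z₂) with hqz
  set vy : V := if qy = qx then v₁ else v₂ with hvy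
  set vz : V := if qz = qx then v₁ else if qz = qy then vy else v₃ with hvz
  have i1 : qx = qy ↔ ((u₀, v₁) : U × V) = (u₀, vy) := by
    by_cases h : qy = qx
    · simp [hvy, h, eq_comm]
    · simp only [hvy, if_neg h, Prod.mk.injEq, true_and]
      constructor
      · intro hh; exact absurd hh.symm h
      · intro hh; exact absurd hh hv12
  have i2 : qx = qz ↔ ((u₀, v₁) : U × V) = (u₀, vz) := by
    by_cases hzx : qz = qx
    · simp [hvz, hzx, eq_comm]
    · rw [hvz, if_neg hzx]
      by_cases hzy : qz = qy
      · rw [if_pos hzy, hvy]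
        by_cases hyx : qy = qx
        · exact absurd (hzy.trans hyx) hzx
        · rw [if_neg hyx]
          simp only [Prod.mk.injEq, true_and]
          constructor
          · intro hh; exact absurd hh.symm hzx
          · intro hh; exact absurd hh hv12
      · rw [if_neg hzy]
        simp only [Prod.mk.injEq, true_and]
        constructor
        · intro hh; exact absurd hh.symm hzx
        · intro hh; exact absurd hh hv13
  have i3 : qy = qz ↔ ((u₀, vy) : U × V) = (u₀, vz) := by
    by_cases hzy : qz = qy
    · by_cases hzx : qz = qx
      · have hyx : qy = qx := hzy.symm.trans hzx
        simp [hvz, hvy, hzx, hzy, hyx, eq_comm]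
      · have hyx : ¬ qy = qx := fun h => hzx (hzy.trans h)
        simp [hvz, hvy, hzx, hzy, hyx, eq_comm]
    · simp only [Prod.mk.injEq, true_and]
      constructor
      · intro hh; exact absurd hh.symm hzy
      · intro hh
        exfalso
        rw [hvy, hvz] at hh
        by_cases hzx : qz = qx
        · rw [if_pos hzx] at hh
          by_cases hyx : qy = qx
          · exact hzy (hzx.trans hyx.symm)
          · rw [if_neg hyx] at hh; exact hv12 hh.symm
        · rw [if_neg hzx, if_neg hzy] at hh
          by_cases hyx : qy = qx
          · rw [if_pos hyx] at hh; exact hv13 hh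
          · rw [if_neg hyx] at hh; exact hv23 hh
  obtain ⟨σ₁, hσ₁, e₁x, e₁y, e₁z⟩ :=
    exists_even_map3 hUV5 qx qy qz (u₀, v₁) (u₀, vy) (u₀, vz) i1 i2 i3
  have hmx : big1 (W := W) σ₁ (x₁, x₂, x₃) = (u₀, v₁, x₃) := by
    rw [big1_apply]; dsimp only; rw [show ((x₁, x₂) : U × V) = qx from rfl, e₁x]
  have hmy : big1 (W := W) σ₁ (y₁, y₂, y₃) = (u₀, vy, y₃) := by
    rw [big1_apply]; dsimp only; rw [show ((y₁, y₂) : U × V) = qy from rfl, e₁y]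
  have hmz : big1 (W := W) σ₁ (z₁, z₂, z₃) = (u₀, vz, z₃) := by
    rw [big1_apply]; dsimp only; rw [show ((z₁, z₂) : U × V) = qz from rfl, e₁z]
  -- distinctness of the middle pairs
  have hmxy : ((v₁, x₃) : V × W) ≠ (vy, y₃) := by
    rw [hvy]
    by_cases h : qy = qx
    · have h3 : x₃ ≠ y₃ := by
        intro hh
        apply hxy
        rw [hqy, hqx, Prod.mk.injEq] at h
        rw [Prod.mk.injEq, Prod.mk.injEq]
        exact ⟨h.1.symm, h.2.symm, hh⟩
      simp [h, h3]
    · simp [h, hv12]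
  have hmxz : ((v₁, x₃) : V × W) ≠ (vz, z₃) := by
    rw [hvz]
    by_cases hzx : qz = qx
    · have h3 : x₃ ≠ z₃ := by
        intro hh
        apply hxz
        rw [hqz, hqx, Prod.mk.injEq] at hzx
        rw [Prod.mk.injEq, Prod.mk.injEq]
        exact ⟨hzx.1.symm, hzx.2.symm, hh⟩
      simp [hzx, h3]
    · rw [if_neg hzx]
      by_cases hzy : qz = qy
      · rw [if_pos hzy, hvy]
        by_cases hyx : qy = qx
        · exact absurd (hzy.trans hyx) hzx
        · simp [hyx, hv12]
      · simp [hzy, hv13]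
  have hmyz : ((vy, y₃) : V × W) ≠ (vz, z₃) := by
    rw [hvy, hvz]
    by_cases hzy : qz = qy
    · have h3 : y₃ ≠ z₃ := by
        intro hh
        apply hyz
        rw [hqz, hqy, Prod.mk.injEq] at hzy
        rw [Prod.mk.injEq, Prod.mk.injEq]
        exact ⟨hzy.1.symm, hzy.2.symm, hh⟩
      by_cases hzx : qz = qx
      · have hyx : qy = qx := hzy.symm.trans hzx
        simp [hzx, hzy, hyx, h3]
      · have hyx : ¬ qy = qx := fun h => hzx (hzy.trans h)
        simp [hzx, hzy, hyx, h3]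
    · by_cases hzx : qz = qx
      · by_cases hyx : qy = qx
        · exact absurd (hzx.trans hyx.symm) hzy
        · simp [hzx, hyx, hv12.symm]
      · by_cases hyx : qy = qx
        · simp [hzx, hzy, hyx, hv13]
        · simp [hzx, hzy, hyx, hv23]
  obtain ⟨σ₂, hσ₂, e₂x, e₂y, e₂z⟩ := exists_even_map3_of_distinct hVW5 hmxy hmxz hmyz
    (by simp [hv12] : ((v₁, w₀) : V × W) ≠ (v₂, w₀))
    (by simp [hv13] : ((v₁, w₀) : V × W) ≠ (v₃, w₀))
    (by simp [hv23] : ((v₂, w₀) : V × W) ≠ (v₃, w₀))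
  refine ⟨big2 σ₂ * big1 σ₁, K.mul_mem (h2 σ₂ hσ₂) (h1 σ₁ hσ₁),
    u₀, w₀, v₁, v₂, v₃, hv12, hv13, hv23, ?_, ?_, ?_⟩
  · rw [Equiv.Perm.mul_apply, hmx, big2_apply]; dsimp only; rw [e₂x]
  · rw [Equiv.Perm.mul_apply, hmy, big2_apply]; dsimp only; rw [e₂y]
  · rw [Equiv.Perm.mul_apply, hmz, big2_apply]; dsimp only; rw [e₂z]

include h1 h2 in
theorem uvw_main (hU : 3 ≤ Fintype.card U) (hV : 3 ≤ Fintype.card V)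
    (hW : 3 ≤ Fintype.card W) (σ : Equiv.Perm (U × V × W))
    (hσ : Equiv.Perm.sign σ = 1) : σ ∈ K := by
  have hmem : σ ∈ Subgroup.closure {τ : Equiv.Perm (U × V × W) | τ.IsThreeCycle} := by
    rw [Equiv.Perm.closure_three_cycles_eq_alternating]
    exact Equiv.Perm.mem_alternatingGroup.mpr hσ
  refine (Subgroup.closure_le K).mpr ?_ hmem
  rintro τ hτ
  obtain ⟨a, b, c, hab, hac, hbc, rfl⟩ := isThreeCycle_eq_cyc hτ
  obtain ⟨h, hhK, u, w, w₁', w₂', w₃', hw12, hw13, hw23, hA, hB, hC⟩ :=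
    three_trans K h1 h2 hU hV hW a b c hab hac hbc
  obtain ⟨w', _, hww', _, _⟩ := exists_pair_ne_of hW w
  have hconj : cyc a b c = h⁻¹ * cyc (h a) (h b) (h c) * h := by
    rw [← cyc_conj h a b c]; group
  rw [SetLike.mem_coe, hconj, hA, hB, hC]
  exact K.mul_mem (K.mul_mem (K.inv_mem hhK)
    (mem_cyc_mid K h1 h2 hU u w w' hww' hw12 hw13 hw23)) hhK

end K3

section gates

variable {A : Type*} [Fintype A] [DecidableEq A] {n : ℕ}

def gapp (i j : Fin n) (τ : Equiv.Perm (A × A)) (x : Fin n → A) : Fin n → A :=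
  fun l => if l = i then (τ (x i, x j)).1 else if l = j then (τ (x i, x j)).2 else x l

lemma gapp_i (i j : Fin n) (τ : Equiv.Perm (A × A)) (x : Fin n → A) :
    gapp i j τ x i = (τ (x i, x j)).1 := by simp [gapp]

lemma gapp_j {i j : Fin n} (hij : i ≠ j) (τ : Equiv.Perm (A × A)) (x : Fin n → A) :
    gapp i j τ x j = (τ (x i, x j)).2 := by simp [gapp, hij.symm]

lemma gapp_other {i j l : Fin n} (hl : l ≠ i) (hl' : l ≠ j) (τ : Equiv.Perm (A × A))
    (x : Fin n → A) : gapp i j τ x l = x l := by simp [gapp, hl, hl']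

lemma gapp_pair {i j : Fin n} (hij : i ≠ j) (τ : Equiv.Perm (A × A)) (x : Fin n → A) :
    (gapp i j τ x i, gapp i j τ x j) = τ (x i, x j) := by
  rw [gapp_i, gapp_j hij]

lemma gapp_gapp {i j : Fin n} (hij : i ≠ j) (τ τ' : Equiv.Perm (A × A)) (x : Fin n → A) :
    gapp i j τ (gapp i j τ' x) = gapp i j (τ * τ') x := by
  funext l
  by_cases h1 : l = i
  · subst h1
    simp only [gapp_i, gapp_j hij, Prod.mk.eta, Equiv.Perm.mul_apply]
  by_cases h2 : l = j
  · subst h2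
    simp only [gapp_i, gapp_j hij, Prod.mk.eta, Equiv.Perm.mul_apply]
  · rw [gapp_other h1 h2, gapp_other h1 h2, gapp_other h1 h2]

lemma gapp_one (i j : Fin n) (x : Fin n → A) : gapp i j 1 x = x := by
  funext l
  by_cases h1 : l = i
  · subst h1; rw [gapp_i]; rfl
  by_cases h2 : l = j
  · subst h2
    rw [gapp_j (Ne.symm h1), Equiv.Perm.one_apply]
  · rw [gapp_other h1 h2]

/-- The reversible gate applying `τ` at positions `(i, j)`. -/
def gate (i j : Fin n) (hij : i ≠ j) (τ : Equiv.Perm (A × A)) : Equiv.Perm (Fin n → A) where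
  toFun := gapp i j τ
  invFun := gapp i j τ⁻¹
  left_inv x := by rw [gapp_gapp hij, inv_mul_cancel, gapp_one]
  right_inv x := by rw [gapp_gapp hij, mul_inv_cancel, gapp_one]

@[simp] lemma gate_apply (i j : Fin n) (hij : i ≠ j) (τ : Equiv.Perm (A × A))
    (x : Fin n → A) : gate i j hij τ x = gapp i j τ x := rfl

lemma gate_mul (i j : Fin n) (hij : i ≠ j) (τ τ' : Equiv.Perm (A × A)) :
    gate i j hij τ * gate i j hij τ' = gate i j hij (τ * τ') :=
  Equiv.ext fun x => gapp_gapp hij τ τ' x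

lemma gate_one (i j : Fin n) (hij : i ≠ j) : gate i j hij (1 : Equiv.Perm (A × A)) = 1 := by
  refine Equiv.ext fun x => ?_
  rw [gate_apply, gapp_one, Equiv.Perm.one_apply]

/-- The set of binary reversible gates given by even permutations. -/
def gateSet (A : Type*) [Fintype A] [DecidableEq A] (n : ℕ) :
    Set (Equiv.Perm (Fin n → A)) :=
  {g : Equiv.Perm (Fin n → A) |
      ∃ (i j : Fin n) (τ : Equiv.Perm (A × A)), i ≠ j ∧ Equiv.Perm.sign τ = 1 ∧
        ∀ x : Fin n → A,
          g x i = (τ (x i, x j)).1 ∧ g x j = (τ (x i, x j)).2 ∧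
          ∀ l : Fin n, l ≠ i → l ≠ j → g x l = x l}

lemma gate_mem_gateSet {i j : Fin n} (hij : i ≠ j) {τ : Equiv.Perm (A × A)}
    (hτ : Equiv.Perm.sign τ = 1) : gate i j hij τ ∈ gateSet A n := by
  refine ⟨i, j, τ, hij, hτ, fun x => ⟨gapp_i i j τ x, gapp_j hij τ x,
    fun l hl hl' => gapp_other hl hl' τ x⟩⟩

lemma eq_gate_of_spec {i j : Fin n} (hij : i ≠ j) {τ : Equiv.Perm (A × A)}
    {g : Equiv.Perm (Fin n → A)}
    (hspec : ∀ x : Fin n → A,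
      g x i = (τ (x i, x j)).1 ∧ g x j = (τ (x i, x j)).2 ∧
      ∀ l : Fin n, l ≠ i → l ≠ j → g x l = x l) :
    g = gate i j hij τ := by
  refine Equiv.ext fun x => funext fun l => ?_
  obtain ⟨hi, hj, ho⟩ := hspec x
  by_cases h1 : l = i
  · subst h1; rw [hi, gate_apply, gapp_i]
  by_cases h2 : l = j
  · subst h2; rw [hj, gate_apply, gapp_j hij]
  · rw [gate_apply, gapp_other h1 h2, ho l h1 h2]

/-- `gate i j hij` as a monoid hom in `τ`. -/
def gateHom (i j : Fin n) (hij : i ≠ j) : Equiv.Perm (A × A) →* Equiv.Perm (Fin n → A) :=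
  MonoidHom.mk' (fun τ => gate i j hij τ) (fun τ τ' => (gate_mul i j hij τ τ').symm)

lemma sign_gate {i j : Fin n} (hij : i ≠ j) {τ : Equiv.Perm (A × A)}
    (hτ : Equiv.Perm.sign τ = 1) : Equiv.Perm.sign (gate i j hij τ) = 1 := by
  set ψ : Equiv.Perm (A × A) →* ℤˣ := Equiv.Perm.sign.comp (gateHom i j hij) with hψ
  have hker : alternatingGroup (A × A) ≤ ψ.ker := by
    rw [← Equiv.Perm.closure_three_cycles_eq_alternating]
    refine (Subgroup.closure_le _).mpr ?_
    rintro θ hθ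
    have h3 : (ψ θ) ^ 3 = 1 := by
      rw [← map_pow, ← hθ.orderOf, pow_orderOf_eq_one, map_one]
    have h2 : (ψ θ) ^ 2 = 1 := Int.units_sq (ψ θ)
    have : ψ θ = 1 := by
      have h3' := h3
      rw [pow_succ, h2, one_mul] at h3'
      exact h3'
    exact this
  exact hker (Equiv.Perm.mem_alternatingGroup.mpr hτ)

lemma even_two_mem (σ : Equiv.Perm (Fin 2 → A)) (hσ : Equiv.Perm.sign σ = 1) :
    σ ∈ Subgroup.closure (gateSet A 2) := by
  set τ : Equiv.Perm (A × A) := (finTwoArrowEquiv A).permCongr σ with hτdef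
  have hτ : Equiv.Perm.sign τ = 1 := by
    rw [hτdef, Equiv.Perm.sign_permCongr]; exact hσ
  have h01 : (0 : Fin 2) ≠ 1 := by decide
  have hkey : ∀ (x : Fin 2 → A), τ (x 0, x 1) = (σ x 0, σ x 1) := by
    intro x
    rw [hτdef, Equiv.permCongr_apply,
      show ((x 0, x 1) : A × A) = finTwoArrowEquiv A x from rfl,
      Equiv.symm_apply_apply]
    rfl
  have hspec : σ = gate 0 1 h01 τ := by
    refine eq_gate_of_spec h01 fun x => ⟨?_, ?_, ?_⟩
    · rw [hkey]
    · rw [hkey]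
    · intro l hl0 hl1
      exfalso
      have hlt := l.isLt
      have h0 : l.val ≠ 0 := fun h => hl0 (Fin.ext h)
      have h1 : l.val ≠ 1 := fun h => hl1 (Fin.ext h)
      omega
  rw [hspec]
  exact Subgroup.subset_closure (gate_mem_gateSet h01 hτ)

end gates

section lift

variable {A : Type*} [Fintype A] [DecidableEq A]

lemma permCongr_mul {α β : Type*} (e : α ≃ β) (p q : Equiv.Perm α) :
    e.permCongr (p * q) = e.permCongr p * e.permCongr q := by
  ext b
  simp [Equiv.permCongr_apply, Equiv.Perm.mul_apply]

lemma prodCongr_perm_mul {α β : Type*} (p q : Equiv.Perm β) :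
    (Equiv.refl α).prodCongr (p * q)
      = ((Equiv.refl α).prodCongr p) * ((Equiv.refl α).prodCongr q) := by
  ext ⟨a, b⟩ : 1
  simp [Equiv.Perm.mul_apply]

/-- Split off the last coordinate. -/
def splitLast (k : ℕ) : (Fin (k + 1) → A) ≃ A × (Fin k → A) :=
  (Fin.insertNthEquiv (fun _ => A) (Fin.last k)).symm

/-- Split off the zeroth coordinate. -/
def splitZero (k : ℕ) : (Fin (k + 1) → A) ≃ A × (Fin k → A) :=
  (Fin.insertNthEquiv (fun _ => A) 0).symm

lemma splitLast_fst {k : ℕ} (x : Fin (k + 1) → A) : (splitLast k x).1 = x (Fin.last k) := rfl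

lemma splitLast_snd {k : ℕ} (x : Fin (k + 1) → A) (l : Fin k) :
    (splitLast k x).2 l = x (Fin.castSucc l) := by
  show x ((Fin.last k).succAbove l) = x (Fin.castSucc l)
  rw [Fin.succAbove_last]

lemma splitLast_symm_last {k : ℕ} (a : A) (f : Fin k → A) :
    (splitLast k).symm (a, f) (Fin.last k) = a := by
  rw [splitLast, Equiv.symm_symm, Fin.insertNthEquiv_apply]
  exact Fin.insertNth_apply_same _ _ _

lemma splitLast_symm_castSucc {k : ℕ} (a : A) (f : Fin k → A) (l : Fin k) :
    (splitLast k).symm (a, f) (Fin.castSucc l) = f l := by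
  rw [splitLast, Equiv.symm_symm, Fin.insertNthEquiv_apply, ← Fin.succAbove_last]
  exact Fin.insertNth_apply_succAbove _ _ _ _

lemma splitZero_fst {k : ℕ} (x : Fin (k + 1) → A) : (splitZero k x).1 = x 0 := rfl

lemma splitZero_snd {k : ℕ} (x : Fin (k + 1) → A) (l : Fin k) :
    (splitZero k x).2 l = x l.succ := by
  show x ((0 : Fin (k + 1)).succAbove l) = x l.succ
  rw [Fin.succAbove_zero]

lemma splitZero_symm_zero {k : ℕ} (a : A) (f : Fin k → A) :
    (splitZero k).symm (a, f) 0 = a := by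
  rw [splitZero, Equiv.symm_symm, Fin.insertNthEquiv_apply]
  exact Fin.insertNth_apply_same _ _ _

lemma splitZero_symm_succ {k : ℕ} (a : A) (f : Fin k → A) (l : Fin k) :
    (splitZero k).symm (a, f) l.succ = f l := by
  rw [splitZero, Equiv.symm_symm, Fin.insertNthEquiv_apply,
    show l.succ = (0 : Fin (k + 1)).succAbove l from by rw [Fin.succAbove_zero]]
  exact Fin.insertNth_apply_succAbove _ _ _ _

/-- Lift a permutation to act on the first `k+1` coordinates out of `k+2`. -/
def phi1 {k : ℕ} (g : Equiv.Perm (Fin (k + 1) → A)) : Equiv.Perm (Fin (k + 2) → A) :=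
  (splitLast (k + 1)).symm.permCongr ((Equiv.refl A).prodCongr g)

/-- Lift a permutation to act on the last `k+1` coordinates out of `k+2`. -/
def phi2 {k : ℕ} (g : Equiv.Perm (Fin (k + 1) → A)) : Equiv.Perm (Fin (k + 2) → A) :=
  (splitZero (k + 1)).symm.permCongr ((Equiv.refl A).prodCongr g)

lemma phi1_apply {k : ℕ} (g : Equiv.Perm (Fin (k + 1) → A)) (x : Fin (k + 2) → A) :
    phi1 g x = (splitLast (k + 1)).symm (x (Fin.last (k + 1)), g ((splitLast (k + 1) x).2)) := by
  rfl

lemma phi1_apply_last {k : ℕ} (g : Equiv.Perm (Fin (k + 1) → A)) (x : Fin (k + 2) → A) :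
    phi1 g x (Fin.last (k + 1)) = x (Fin.last (k + 1)) := by
  rw [phi1_apply, splitLast_symm_last]

lemma phi1_apply_castSucc {k : ℕ} (g : Equiv.Perm (Fin (k + 1) → A)) (x : Fin (k + 2) → A)
    (l : Fin (k + 1)) :
    phi1 g x (Fin.castSucc l) = g (fun r => x (Fin.castSucc r)) l := by
  rw [phi1_apply, splitLast_symm_castSucc]
  have h : (splitLast (k + 1) x).2 = fun r => x (Fin.castSucc r) :=
    funext fun r => splitLast_snd x r
  rw [h]

lemma phi2_apply {k : ℕ} (g : Equiv.Perm (Fin (k + 1) → A)) (x : Fin (k + 2) → A) :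
    phi2 g x = (splitZero (k + 1)).symm (x 0, g ((splitZero (k + 1) x).2)) := by
  rfl

lemma phi2_apply_zero {k : ℕ} (g : Equiv.Perm (Fin (k + 1) → A)) (x : Fin (k + 2) → A) :
    phi2 g x 0 = x 0 := by
  rw [phi2_apply, splitZero_symm_zero]

lemma phi2_apply_succ {k : ℕ} (g : Equiv.Perm (Fin (k + 1) → A)) (x : Fin (k + 2) → A)
    (l : Fin (k + 1)) :
    phi2 g x l.succ = g (fun r => x r.succ) l := by
  rw [phi2_apply, splitZero_symm_succ]
  have h : (splitZero (k + 1) x).2 = fun r => x r.succ :=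
    funext fun r => splitZero_snd x r
  rw [h]

/-- `phi1` as a monoid hom. -/
def phi1Hom {k : ℕ} : Equiv.Perm (Fin (k + 1) → A) →* Equiv.Perm (Fin (k + 2) → A) :=
  MonoidHom.mk' phi1 (by
    intro g g'
    unfold phi1
    rw [prodCongr_perm_mul, permCongr_mul])

/-- `phi2` as a monoid hom. -/
def phi2Hom {k : ℕ} : Equiv.Perm (Fin (k + 1) → A) →* Equiv.Perm (Fin (k + 2) → A) :=
  MonoidHom.mk' phi2 (by
    intro g g'
    unfold phi2
    rw [prodCongr_perm_mul, permCongr_mul])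

lemma phi1_gate {k : ℕ} (i j : Fin (k + 1)) (hij : i ≠ j) (τ : Equiv.Perm (A × A)) :
    phi1 (gate i j hij τ)
      = gate (Fin.castSucc i) (Fin.castSucc j)
          (fun h => hij (Fin.castSucc_injective _ h)) τ := by
  refine eq_gate_of_spec _ fun x => ⟨?_, ?_, ?_⟩
  · rw [phi1_apply_castSucc, gate_apply, gapp_i]
  · rw [phi1_apply_castSucc, gate_apply, gapp_j hij]
  · intro l hl1 hl2
    rcases Fin.eq_castSucc_or_eq_last l with ⟨l', rfl⟩ | rfl
    · rw [phi1_apply_castSucc, gate_apply,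
        gapp_other (fun h => hl1 (congrArg Fin.castSucc h))
          (fun h => hl2 (congrArg Fin.castSucc h))]
    · rw [phi1_apply_last]

lemma phi2_gate {k : ℕ} (i j : Fin (k + 1)) (hij : i ≠ j) (τ : Equiv.Perm (A × A)) :
    phi2 (gate i j hij τ)
      = gate i.succ j.succ (fun h => hij (Fin.succ_injective _ h)) τ := by
  refine eq_gate_of_spec _ fun x => ⟨?_, ?_, ?_⟩
  · rw [phi2_apply_succ, gate_apply, gapp_i]
  · rw [phi2_apply_succ, gate_apply, gapp_j hij]
  · intro l hl1 hl2
    rcases Fin.eq_zero_or_eq_succ l with rfl | ⟨l', rfl⟩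
    · rw [phi2_apply_zero]
    · rw [phi2_apply_succ, gate_apply,
        gapp_other (fun h => hl1 (congrArg Fin.succ h))
          (fun h => hl2 (congrArg Fin.succ h))]

lemma phi1_mem_closure {k : ℕ} {g : Equiv.Perm (Fin (k + 1) → A)}
    (hg : g ∈ Subgroup.closure (gateSet A (k + 1))) :
    phi1 g ∈ Subgroup.closure (gateSet A (k + 2)) := by
  have hle : Subgroup.closure (gateSet A (k + 1))
      ≤ Subgroup.comap (phi1Hom (A := A) (k := k)) (Subgroup.closure (gateSet A (k + 2))) := by
    refine (Subgroup.closure_le _).mpr ?_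
    rintro g' ⟨i, j, τ, hij, hτ, hspec⟩
    have hg' : g' = gate i j hij τ := eq_gate_of_spec hij hspec
    have : phi1Hom g' = gate (Fin.castSucc i) (Fin.castSucc j)
        (fun h => hij (Fin.castSucc_injective _ h)) τ := by
      rw [hg']; exact phi1_gate i j hij τ
    simp only [SetLike.mem_coe, Subgroup.mem_comap, this]
    exact Subgroup.subset_closure (gate_mem_gateSet _ hτ)
  exact hle hg

lemma phi2_mem_closure {k : ℕ} {g : Equiv.Perm (Fin (k + 1) → A)}
    (hg : g ∈ Subgroup.closure (gateSet A (k + 1))) :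
    phi2 g ∈ Subgroup.closure (gateSet A (k + 2)) := by
  have hle : Subgroup.closure (gateSet A (k + 1))
      ≤ Subgroup.comap (phi2Hom (A := A) (k := k)) (Subgroup.closure (gateSet A (k + 2))) := by
    refine (Subgroup.closure_le _).mpr ?_
    rintro g' ⟨i, j, τ, hij, hτ, hspec⟩
    have hg' : g' = gate i j hij τ := eq_gate_of_spec hij hspec
    have : phi2Hom g' = gate i.succ j.succ
        (fun h => hij (Fin.succ_injective _ h)) τ := by
      rw [hg']; exact phi2_gate i j hij τ
    simp only [SetLike.mem_coe, Subgroup.mem_comap, this]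
    exact Subgroup.subset_closure (gate_mem_gateSet _ hτ)
  exact hle hg

end lift

section transport

variable {A : Type*} [Fintype A] [DecidableEq A]

/-- `permCongr` as a monoid hom. -/
def permCongrHom {α β : Type*} (e : α ≃ β) : Equiv.Perm α →* Equiv.Perm β :=
  MonoidHom.mk' e.permCongr (fun p q => permCongr_mul e p q)

lemma permCongrHom_apply {α β : Type*} (e : α ≃ β) (p : Equiv.Perm α) :
    permCongrHom e p = e.permCongr p := rfl

lemma splitZero_symm_zero' {k : ℕ} (q : A × (Fin k → A)) :
    (splitZero k).symm q 0 = q.1 := splitZero_symm_zero q.1 q.2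

lemma splitZero_symm_succ' {k : ℕ} (q : A × (Fin k → A)) (l : Fin k) :
    (splitZero k).symm q l.succ = q.2 l := splitZero_symm_succ q.1 q.2 l

lemma splitLast_symm_last' {k : ℕ} (q : A × (Fin k → A)) :
    (splitLast k).symm q (Fin.last k) = q.1 := splitLast_symm_last q.1 q.2

lemma splitLast_symm_castSucc' {k : ℕ} (q : A × (Fin k → A)) (l : Fin k) :
    (splitLast k).symm q (Fin.castSucc l) = q.2 l := splitLast_symm_castSucc q.1 q.2 l

/-- Split the middle coordinates from the last. -/
def E2 (A : Type*) [Fintype A] [DecidableEq A] (m : ℕ) :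
    (Fin (m + 2) → A) ≃ (Fin (m + 1) → A) × A :=
  (splitLast (m + 1)).trans (Equiv.prodComm A (Fin (m + 1) → A))

/-- The transport equivalence `Fin (m+3) → A ≃ U × (V × W)`. -/
def EE (A : Type*) [Fintype A] [DecidableEq A] (m : ℕ) :
    (Fin (m + 3) → A) ≃ A × ((Fin (m + 1) → A) × A) :=
  (splitZero (m + 2)).trans ((Equiv.refl A).prodCongr (E2 A m))

lemma EE_fst {m : ℕ} (x : Fin (m + 3) → A) : (EE A m x).1 = x 0 := rfl

lemma EE_snd_fst {m : ℕ} (x : Fin (m + 3) → A) (r : Fin (m + 1)) :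
    (EE A m x).2.1 r = x (Fin.castSucc r).succ := by
  show ((splitLast (m + 1)) ((splitZero (m + 2) x).2)).2 r = _
  rw [splitLast_snd, splitZero_snd]

lemma EE_snd_snd {m : ℕ} (x : Fin (m + 3) → A) :
    (EE A m x).2.2 = x (Fin.last (m + 2)) := by
  show ((splitLast (m + 1)) ((splitZero (m + 2) x).2)).1 = _
  rw [splitLast_fst, splitZero_snd, Fin.succ_last]

lemma EE_symm_apply {m : ℕ} (q : A × ((Fin (m + 1) → A) × A)) :
    (EE A m).symm q
      = (splitZero (m + 2)).symm (q.1, (splitLast (m + 1)).symm (q.2.2, q.2.1)) := rfl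

lemma EE_symm_zero {m : ℕ} (q : A × ((Fin (m + 1) → A) × A)) :
    (EE A m).symm q 0 = q.1 := by
  rw [EE_symm_apply]
  exact splitZero_symm_zero' _

lemma EE_symm_succ_castSucc {m : ℕ} (q : A × ((Fin (m + 1) → A) × A)) (r : Fin (m + 1)) :
    (EE A m).symm q (Fin.castSucc r).succ = q.2.1 r := by
  rw [EE_symm_apply, splitZero_symm_succ']
  exact splitLast_symm_castSucc' _ _

lemma EE_symm_succ_last {m : ℕ} (q : A × ((Fin (m + 1) → A) × A)) :
    (EE A m).symm q (Fin.last (m + 1)).succ = q.2.2 := by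
  rw [EE_symm_apply, splitZero_symm_succ']
  exact splitLast_symm_last' _

lemma key1 (m : ℕ) (σ : Equiv.Perm (A × (Fin (m + 1) → A))) :
    (EE A m).symm.permCongr (big1 σ)
      = phi1 ((splitZero (m + 1)).symm.permCongr σ) := by
  refine Equiv.ext fun x => funext fun l₀ => ?_
  have hQ : ((EE A m x).1, (EE A m x).2.1)
      = splitZero (m + 1) (fun r => x (Fin.castSucc r)) := by
    have h1 : ((EE A m x).1 : A) = (splitZero (m + 1) (fun r => x (Fin.castSucc r))).1 := by
      rw [EE_fst, splitZero_fst]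
      rw [show Fin.castSucc (0 : Fin (m + 2)) = (0 : Fin (m + 3)) from Fin.castSucc_zero]
    have h2 : ((EE A m x).2.1 : Fin (m + 1) → A)
        = (splitZero (m + 1) (fun r => x (Fin.castSucc r))).2 := by
      funext r
      rw [EE_snd_fst, splitZero_snd, Fin.succ_castSucc]
    exact Prod.ext h1 h2
  rw [Equiv.permCongr_apply, Equiv.symm_symm, big1_apply]
  rcases Fin.eq_zero_or_eq_succ l₀ with rfl | ⟨l, rfl⟩
  · rw [EE_symm_zero]
    conv_rhs => rw [show (0 : Fin (m + 3)) = Fin.castSucc (0 : Fin (m + 2)) from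
      Fin.castSucc_zero.symm]
    rw [phi1_apply_castSucc, Equiv.permCongr_apply, Equiv.symm_symm,
      splitZero_symm_zero', ← hQ]
  · rcases Fin.eq_castSucc_or_eq_last l with ⟨r, rfl⟩ | rfl
    · rw [EE_symm_succ_castSucc]
      rw [Fin.succ_castSucc, phi1_apply_castSucc, Equiv.permCongr_apply, Equiv.symm_symm,
        splitZero_symm_succ', ← hQ]
    · rw [EE_symm_succ_last, EE_snd_snd, Fin.succ_last, phi1_apply_last]

lemma key2 (m : ℕ) (σ : Equiv.Perm ((Fin (m + 1) → A) × A)) :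
    (EE A m).symm.permCongr (big2 σ)
      = phi2 ((E2 A m).symm.permCongr σ) := by
  refine Equiv.ext fun x => ?_
  rw [Equiv.permCongr_apply, Equiv.symm_symm, big2_apply, EE_symm_apply,
    phi2_apply, Equiv.permCongr_apply, Equiv.symm_symm]
  rfl

end transport

section main

variable {A : Type*} [Fintype A] [DecidableEq A]

theorem hard_dir (hA : 3 ≤ Fintype.card A) :
    ∀ n : ℕ, 2 ≤ n → ∀ σ : Equiv.Perm (Fin n → A), Equiv.Perm.sign σ = 1 →
      σ ∈ Subgroup.closure (gateSet A n) := by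
  intro n hn
  induction n, hn using Nat.le_induction with
  | base => exact fun σ hσ => even_two_mem σ hσ
  | succ n hn IH =>
    obtain ⟨m, rfl⟩ : ∃ m, n = m + 2 := ⟨n - 2, by omega⟩
    intro σ hσ
    set K : Subgroup (Equiv.Perm (A × ((Fin (m + 1) → A) × A))) :=
      Subgroup.comap (permCongrHom (EE A m).symm)
        (Subgroup.closure (gateSet A (m + 3))) with hK
    have h1 : ∀ τ : Equiv.Perm (A × (Fin (m + 1) → A)),
        Equiv.Perm.sign τ = 1 → big1 τ ∈ K := by
      intro τ hτ
      have hsign : Equiv.Perm.sign ((splitZero (m + 1)).symm.permCongr τ) = 1 := by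
        rw [Equiv.Perm.sign_permCongr]; exact hτ
      have hmem := phi1_mem_closure (IH _ hsign)
      rw [hK, Subgroup.mem_comap, permCongrHom_apply, key1 m τ]
      exact hmem
    have h2 : ∀ τ : Equiv.Perm ((Fin (m + 1) → A) × A),
        Equiv.Perm.sign τ = 1 → big2 τ ∈ K := by
      intro τ hτ
      have hsign : Equiv.Perm.sign ((E2 A m).symm.permCongr τ) = 1 := by
        rw [Equiv.Perm.sign_permCongr]; exact hτ
      have hmem := phi2_mem_closure (IH _ hsign)
      rw [hK, Subgroup.mem_comap, permCongrHom_apply, key2 m τ]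
      exact hmem
    have hV : 3 ≤ Fintype.card (Fin (m + 1) → A) := by
      rw [Fintype.card_fun, Fintype.card_fin]
      calc (3 : ℕ) ≤ Fintype.card A := hA
        _ ≤ Fintype.card A ^ (m + 1) := Nat.le_self_pow (by omega) _
    have hres := uvw_main K h1 h2 hA hV hA ((EE A m).permCongr σ)
      (by rw [Equiv.Perm.sign_permCongr]; exact hσ)
    rw [hK, Subgroup.mem_comap, permCongrHom_apply, ← Equiv.permCongr_symm,
      Equiv.symm_apply_apply] at hres
    exact hres

end main

end Stmt13

/-- for an alphabet `A` with `|A| ≥ 3` and `n ≥ 2`, the binary reversible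
gates given by even permutations of `A × A` applied at pairs of distinct positions
generate the alternating group on `Fin n → A`. -/
theorem stmt_13 {A : Type*} [Fintype A] [DecidableEq A] (hA : 3 ≤ Fintype.card A)
    {n : ℕ} (hn : 2 ≤ n) :
    Subgroup.closure {g : Equiv.Perm (Fin n → A) |
      ∃ (i j : Fin n) (τ : Equiv.Perm (A × A)), i ≠ j ∧ Equiv.Perm.sign τ = 1 ∧
        ∀ x : Fin n → A,
          g x i = (τ (x i, x j)).1 ∧ g x j = (τ (x i, x j)).2 ∧
          ∀ l : Fin n, l ≠ i → l ≠ j → g x l = x l} =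
      alternatingGroup (Fin n → A) := by
  show Subgroup.closure (Stmt13.gateSet A n) = alternatingGroup (Fin n → A)
  refine le_antisymm ?_ ?_
  · refine (Subgroup.closure_le _).mpr ?_
    rintro g ⟨i, j, τ, hij, hτ, hspec⟩
    have hg : g = Stmt13.gate i j hij τ := Stmt13.eq_gate_of_spec hij hspec
    rw [SetLike.mem_coe, Equiv.Perm.mem_alternatingGroup, hg]
    exact Stmt13.sign_gate hij hτ
  · intro σ hσ
    exact Stmt13.hard_dir hA n hn σ (Equiv.Perm.mem_alternatingGroup.mp hσ)
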